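/- Let X be a real Banach space, 0 < r < 1, and a ∈ X with r < ‖a‖ ≤ 1. Define T : Lip₀({0} ∪ B[a,r]) → Lip₀(B_X) ×_∞ ℝ by T(f)(x) = (f(r·x + a) - f(a), f(a)) for x in the closed unit ball B_X. Then T is a bounded linear bijection with ‖T‖ ≤ 1 and ‖T⁻¹‖ ≤ max{1/r, 2/(‖a‖ - r)}. In particular, Lip₀({0} ∪ B[a,r]) is isomorphic to Lip₀(B_X) ⊕_∞ ℝ with distortion at most max{1/r, 2/(‖a‖ - r)}. -/

import Mathlib

open Metric

/-- `f : S → ℝ` belongs to Lip₀(S) (base point z): it vanishes at z and is Lipschitz. -/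
def MemLip0 {X : Type*} [MetricSpace X] (z : X) (S : Set X) (f : S → ℝ) : Prop :=
  (∀ x : S, (x : X) = z → f x = 0) ∧
  ∃ K : ℝ, 0 ≤ K ∧ ∀ x y : S, |f x - f y| ≤ K * dist x y

/-- The Lipschitz-constant norm of `f : S → ℝ`. -/
noncomputable def lipNormOn {X : Type*} [MetricSpace X] (S : Set X) (f : S → ℝ) : ℝ :=
  sInf {K : ℝ | 0 ≤ K ∧ ∀ x y : S, |f x - f y| ≤ K * dist x y}


lemma lipNormOn_le {X : Type*} [MetricSpace X] {S : Set X} {f : S → ℝ} {K : ℝ}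
    (hK : 0 ≤ K) (h : ∀ x y : S, |f x - f y| ≤ K * dist x y) : lipNormOn S f ≤ K :=
  csInf_le ⟨0, fun _ hk => hk.1⟩ ⟨hK, h⟩

lemma lipNormOn_spec {X : Type*} [MetricSpace X] {S : Set X} {f : S → ℝ}
    (h : ∃ K : ℝ, 0 ≤ K ∧ ∀ x y : S, |f x - f y| ≤ K * dist x y) :
    0 ≤ lipNormOn S f ∧ ∀ x y : S, |f x - f y| ≤ lipNormOn S f * dist x y := by
  have hne : {K : ℝ | 0 ≤ K ∧ ∀ x y : S, |f x - f y| ≤ K * dist x y}.Nonempty := h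
  have hbdd : BddBelow {K : ℝ | 0 ≤ K ∧ ∀ x y : S, |f x - f y| ≤ K * dist x y} :=
    ⟨0, fun _ hk => hk.1⟩
  have h0 : 0 ≤ lipNormOn S f := le_csInf hne fun _ hk => hk.1
  refine ⟨h0, fun x y => ?_⟩
  rcases eq_or_lt_of_le (dist_nonneg : (0:ℝ) ≤ dist x y) with hd | hd
  · have : x = y := by
      have := eq_of_dist_eq_zero (hd.symm)
      exact this
    simp [this]
  · rw [← div_le_iff₀ hd]
    refine le_csInf hne fun K hK => ?_
    rw [div_le_iff₀ hd]
    exact hK.2 x y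

lemma lipCore {X : Type*} [NormedAddCommGroup X] [NormedSpace ℝ X]
    (r : ℝ) (a : X) (hr0 : 0 < r) (hra : r < ‖a‖)
    (F : (({0} ∪ closedBall a r : Set X)) → ℝ)
    (g : (closedBall (0:X) 1 : Set X) → ℝ) (lam Kg : ℝ) (hKg : 0 ≤ Kg)
    (hg0 : ∀ y : (closedBall (0:X) 1 : Set X), (y : X) = 0 → g y = 0)
    (hgL : ∀ x y : (closedBall (0:X) 1 : Set X), |g x - g y| ≤ Kg * dist x y)
    (hF0 : ∀ m : (({0} ∪ closedBall a r : Set X)), (m : X) = 0 → F m = 0)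
    (hFg : ∀ (m : (({0} ∪ closedBall a r : Set X))) (hm : (m : X) ∈ closedBall a r)
      (hy : r⁻¹ • ((m : X) - a) ∈ closedBall (0:X) 1),
      F m = g ⟨r⁻¹ • ((m : X) - a), hy⟩ + lam) :
    ∀ x y : (({0} ∪ closedBall a r : Set X)),
      |F x - F y| ≤ (max (1/r) (2/(‖a‖ - r)) * max Kg |lam|) * dist x y := by
  have har : 0 < ‖a‖ - r := by linarith
  have hCpos : 0 ≤ max (1/r) (2/(‖a‖ - r)) :=
    le_trans (by positivity) (le_max_left (1/r) (2/(‖a‖-r)))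
  have hKpos : 0 ≤ max Kg |lam| := le_trans hKg (le_max_left _ _)
  have hinvB : ∀ m : X, m ∈ closedBall a r → r⁻¹ • (m - a) ∈ closedBall (0:X) 1 := by
    intro m hm
    rw [mem_closedBall, dist_zero_right, norm_smul, norm_inv, Real.norm_of_nonneg hr0.le]
    rw [mem_closedBall, dist_eq_norm] at hm
    calc r⁻¹ * ‖m - a‖ ≤ r⁻¹ * r := mul_le_mul_of_nonneg_left hm (by positivity)
      _ = 1 := inv_mul_cancel₀ hr0.ne'
  have hgbound : ∀ y : (closedBall (0:X) 1 : Set X), |g y| ≤ Kg := by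
    intro y
    have h0m : (0:X) ∈ closedBall (0:X) 1 := mem_closedBall_self (by norm_num)
    have h := hgL y ⟨0, h0m⟩
    rw [hg0 ⟨0, h0m⟩ rfl, sub_zero] at h
    refine h.trans ?_
    have hy1 : dist y (⟨0, h0m⟩ : (closedBall (0:X) 1 : Set X)) ≤ 1 := by
      rw [Subtype.dist_eq]
      simpa [dist_eq_norm] using (mem_closedBall_zero_iff.mp y.2)
    calc Kg * dist y (⟨0, h0m⟩ : (closedBall (0:X) 1 : Set X)) ≤ Kg * 1 :=
          mul_le_mul_of_nonneg_left hy1 hKg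
      _ = Kg := mul_one _
  have key : ∀ x y : (({0} ∪ closedBall a r : Set X)), (x : X) = 0 →
      (y : X) ∈ closedBall a r →
      |F x - F y| ≤ (max (1/r) (2/(‖a‖ - r)) * max Kg |lam|) * dist x y := by
    intro x y hx hy
    have hyB := hinvB _ hy
    rw [hF0 x hx, hFg y hy hyB, zero_sub, abs_neg]
    have h1 : |g ⟨r⁻¹ • ((y:X) - a), hyB⟩ + lam| ≤ Kg + |lam| :=
      (abs_add_le _ _).trans (add_le_add_left (hgbound _) _)
    have h2 : Kg + |lam| ≤ 2 * max Kg |lam| := by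
      have h3 := le_max_left Kg |lam|; have h4 := le_max_right Kg |lam|; linarith
    have hdist : ‖a‖ - r ≤ dist x y := by
      rw [Subtype.dist_eq, hx, dist_eq_norm, zero_sub, norm_neg]
      have h3 : ‖(y:X) - a‖ ≤ r := by
        rw [mem_closedBall, dist_eq_norm] at hy; exact hy
      have h4 : ‖a‖ ≤ ‖(y:X)‖ + ‖(y:X) - a‖ := by
        have h5 := norm_sub_le (y:X) ((y:X) - a)
        simpa [sub_sub_cancel] using h5
      linarith
    calc |g ⟨r⁻¹ • ((y:X) - a), hyB⟩ + lam| ≤ 2 * max Kg |lam| := h1.trans h2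
      _ = (2/(‖a‖-r)) * max Kg |lam| * (‖a‖ - r) := by field_simp
      _ ≤ (2/(‖a‖-r)) * max Kg |lam| * dist x y :=
          mul_le_mul_of_nonneg_left hdist (by positivity)
      _ ≤ max (1/r) (2/(‖a‖ - r)) * max Kg |lam| * dist x y :=
          mul_le_mul_of_nonneg_right
            (mul_le_mul_of_nonneg_right (le_max_right _ _) hKpos) dist_nonneg
  intro x y
  rcases x.2 with hx | hx <;> rcases y.2 with hy | hy
  · simp only [Set.mem_singleton_iff] at hx hy
    rw [hF0 x hx, hF0 y hy, sub_zero, abs_zero]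
    positivity
  · exact key x y hx hy
  · rw [abs_sub_comm, dist_comm]
    exact key y x hy hx
  · have hxB := hinvB _ hx
    have hyB := hinvB _ hy
    rw [hFg x hx hxB, hFg y hy hyB, add_sub_add_right_eq_sub]
    refine (hgL _ _).trans ?_
    have hdist : dist (⟨r⁻¹ • ((x:X) - a), hxB⟩ : (closedBall (0:X) 1 : Set X))
        (⟨r⁻¹ • ((y:X) - a), hyB⟩ : (closedBall (0:X) 1 : Set X)) = r⁻¹ * dist x y := by
      rw [Subtype.dist_eq, Subtype.dist_eq, dist_eq_norm, dist_eq_norm]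
      rw [← smul_sub, norm_smul, norm_inv, Real.norm_of_nonneg hr0.le]
      congr 1
      abel_nf
    rw [hdist]
    calc Kg * (r⁻¹ * dist x y) ≤ max Kg |lam| * (r⁻¹ * dist x y) :=
          mul_le_mul_of_nonneg_right (le_max_left _ _) (by positivity)
      _ = (1/r) * max Kg |lam| * dist x y := by ring
      _ ≤ max (1/r) (2/(‖a‖ - r)) * max Kg |lam| * dist x y :=
          mul_le_mul_of_nonneg_right
            (mul_le_mul_of_nonneg_right (le_max_left _ _) hKpos) dist_nonneg

/-- The map T(f)(x) = (f(r·x + a) - f(a), f(a)) is a linear bijection from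
Lip₀({0} ∪ B[a,r]) onto Lip₀(B_X) ×_∞ ℝ with ‖T‖ ≤ 1 and
‖T⁻¹‖ ≤ max{1/r, 2/(‖a‖-r)}. -/
theorem stmt4 {X : Type*} [NormedAddCommGroup X] [NormedSpace ℝ X] [CompleteSpace X]
    (r : ℝ) (a : X) (hr0 : 0 < r) (hr1 : r < 1) (hra : r < ‖a‖) (ha1 : ‖a‖ ≤ 1)
    (M B : Set X) (hM : M = {0} ∪ closedBall a r) (hB : B = closedBall (0 : X) 1)
    (T : {f : M → ℝ // MemLip0 0 M f} → {g : B → ℝ // MemLip0 0 B g} × ℝ)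
    (hT : ∀ f : {f : M → ℝ // MemLip0 0 M f}, ∀ x : B,
      ∀ hx : r • (x : X) + a ∈ M, ∀ haM : a ∈ M,
        (T f).1.1 x = f.1 ⟨r • (x : X) + a, hx⟩ - f.1 ⟨a, haM⟩ ∧
        (T f).2 = f.1 ⟨a, haM⟩) :
    Function.Bijective T ∧
    (∀ f g h : {f : M → ℝ // MemLip0 0 M f}, ∀ c : ℝ,
      (∀ x : M, h.1 x = c * f.1 x + g.1 x) →
      (∀ x : B, (T h).1.1 x = c * (T f).1.1 x + (T g).1.1 x) ∧
        (T h).2 = c * (T f).2 + (T g).2) ∧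
    (∀ f : {f : M → ℝ // MemLip0 0 M f},
      max (lipNormOn B (T f).1.1) |(T f).2| ≤ lipNormOn M f.1) ∧
    (∀ f : {f : M → ℝ // MemLip0 0 M f},
      lipNormOn M f.1 ≤
        max (1 / r) (2 / (‖a‖ - r)) * max (lipNormOn B (T f).1.1) |(T f).2|) := by
  subst hM hB
  have har : 0 < ‖a‖ - r := by linarith
  have haM : a ∈ ({0} ∪ closedBall a r : Set X) := Or.inr (mem_closedBall_self hr0.le)
  have h0M : (0:X) ∈ ({0} ∪ closedBall a r : Set X) := Or.inl rfl
  have h0B : (0:X) ∈ closedBall (0:X) 1 := mem_closedBall_self zero_le_one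
  have hrxball : ∀ x : (closedBall (0:X) 1 : Set X),
      r • (x:X) + a ∈ closedBall a r := by
    intro x
    rw [mem_closedBall, dist_eq_norm, add_sub_cancel_right, norm_smul,
      Real.norm_of_nonneg hr0.le]
    have hx1 := mem_closedBall_zero_iff.mp x.2
    nlinarith
  have hrxM : ∀ x : (closedBall (0:X) 1 : Set X),
      r • (x:X) + a ∈ ({0} ∪ closedBall a r : Set X) := fun x => Or.inr (hrxball x)
  have hinvB : ∀ m : X, m ∈ closedBall a r → r⁻¹ • (m - a) ∈ closedBall (0:X) 1 := by
    intro m hm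
    rw [mem_closedBall, dist_zero_right, norm_smul, norm_inv, Real.norm_of_nonneg hr0.le]
    rw [mem_closedBall, dist_eq_norm] at hm
    calc r⁻¹ * ‖m - a‖ ≤ r⁻¹ * r := mul_le_mul_of_nonneg_left hm (by positivity)
      _ = 1 := inv_mul_cancel₀ hr0.ne'
  have hballne : ∀ m : X, m ∈ closedBall a r → m ≠ 0 := by
    intro m hm h0
    rw [h0, mem_closedBall, dist_zero_left] at hm
    linarith
  have hrecon : ∀ m : X, r • (r⁻¹ • (m - a)) + a = m := by
    intro m
    rw [smul_inv_smul₀ hr0.ne', sub_add_cancel]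
  have hTfst : ∀ f, ∀ x : (closedBall (0:X) 1 : Set X),
      (T f).1.1 x = f.1 ⟨r • (x:X) + a, hrxM x⟩ - f.1 ⟨a, haM⟩ :=
    fun f x => (hT f x (hrxM x) haM).1
  have hTsnd : ∀ f, (T f).2 = f.1 ⟨a, haM⟩ :=
    fun f => (hT f ⟨0, h0B⟩ (hrxM ⟨0, h0B⟩) haM).2
  have hfval : ∀ f, ∀ m : (({0} ∪ closedBall a r : Set X)),
      ∀ hm : (m:X) ∈ closedBall a r,
      (T f).1.1 ⟨r⁻¹ • ((m:X) - a), hinvB _ hm⟩ = f.1 m - f.1 ⟨a, haM⟩ := by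
    intro f m hm
    rw [hTfst f ⟨r⁻¹ • ((m:X) - a), hinvB _ hm⟩]
    have e : (⟨r • (((⟨r⁻¹ • ((m:X) - a), hinvB _ hm⟩ :
        (closedBall (0:X) 1 : Set X))) : X) + a, hrxM _⟩ :
        (({0} ∪ closedBall a r : Set X))) = m := Subtype.ext (hrecon (m:X))
    rw [e]
  refine ⟨⟨?_, ?_⟩, ?_, ?_, ?_⟩
  · -- injective
    intro f f' heq
    apply Subtype.ext
    funext m
    have hsnd : f.1 ⟨a, haM⟩ = f'.1 ⟨a, haM⟩ := by
      rw [← hTsnd f, ← hTsnd f', heq]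
    rcases m.2 with hm | hm
    · rw [f.2.1 m hm, f'.2.1 m hm]
    · have h1 := hfval f m hm
      have h2 := hfval f' m hm
      rw [heq] at h1
      rw [h2] at h1
      linarith
  · -- surjective
    rintro ⟨g, lam⟩
    classical
    obtain ⟨Kg, hKg0, hKgL⟩ := g.2.2
    set F : (({0} ∪ closedBall a r : Set X)) → ℝ := fun m =>
      if h : (m:X) ∈ closedBall a r then g.1 ⟨r⁻¹ • ((m:X) - a), hinvB _ h⟩ + lam
      else 0 with hF
    have hF0 : ∀ m : (({0} ∪ closedBall a r : Set X)), (m:X) = 0 → F m = 0 := by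
      intro m hm
      rw [hF]
      simp only
      rw [dif_neg (fun h => hballne _ h hm)]
    have hFg : ∀ (m : (({0} ∪ closedBall a r : Set X))) (hm : (m:X) ∈ closedBall a r)
        (hy : r⁻¹ • ((m:X) - a) ∈ closedBall (0:X) 1),
        F m = g.1 ⟨r⁻¹ • ((m:X) - a), hy⟩ + lam := by
      intro m hm hy
      rw [hF]
      simp only
      rw [dif_pos hm]
    have hmemF : MemLip0 0 ({0} ∪ closedBall a r) F := by
      refine ⟨hF0, max (1/r) (2/(‖a‖ - r)) * max Kg |lam|, ?_, ?_⟩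
      · have : (0:ℝ) ≤ max (1/r) (2/(‖a‖ - r)) :=
          le_trans (by positivity) (le_max_left (1/r) (2/(‖a‖-r)))
        have h2 : (0:ℝ) ≤ max Kg |lam| := le_trans hKg0 (le_max_left _ _)
        positivity
      · exact lipCore r a hr0 hra F g.1 lam Kg hKg0 g.2.1 hKgL hF0 hFg
    refine ⟨⟨F, hmemF⟩, ?_⟩
    have ea : F ⟨a, haM⟩ = lam := by
      rw [hFg ⟨a, haM⟩ (mem_closedBall_self hr0.le)
        (hinvB a (mem_closedBall_self hr0.le))]
      rw [g.2.1 _ (by simp)]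
      ring
    have e2 : (T ⟨F, hmemF⟩).2 = lam := by rw [hTsnd]; exact ea
    have e1 : (T ⟨F, hmemF⟩).1 = g := by
      apply Subtype.ext
      funext x
      rw [hTfst ⟨F, hmemF⟩ x]
      simp only
      rw [ea, hFg ⟨r • (x:X) + a, hrxM x⟩ (hrxball x)
        (hinvB _ (hrxball x))]
      have ev : r⁻¹ • ((r • (x:X) + a) - a) = (x:X) := by
        rw [add_sub_cancel_right, inv_smul_smul₀ hr0.ne']
      have : (⟨r⁻¹ • ((r • (x:X) + a) - a), hinvB _ (hrxball x)⟩ :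
          (closedBall (0:X) 1 : Set X)) = x := Subtype.ext ev
      rw [this]
      ring
    exact Prod.ext e1 e2
  · -- linearity
    intro f g h c hrel
    constructor
    · intro x
      rw [hTfst h x, hTfst f x, hTfst g x, hrel, hrel]
      ring
    · rw [hTsnd h, hTsnd f, hTsnd g, hrel]
  · -- norm ≤ 1
    intro f
    obtain ⟨hK0, hKL⟩ := lipNormOn_spec f.2.2
    apply max_le
    · apply lipNormOn_le hK0
      intro x y
      rw [hTfst f x, hTfst f y, sub_sub_sub_cancel_right]
      refine (hKL _ _).trans ?_
      have hd : dist (⟨r • (x:X) + a, hrxM x⟩ : (({0} ∪ closedBall a r : Set X)))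
          (⟨r • (y:X) + a, hrxM y⟩ : (({0} ∪ closedBall a r : Set X)))
          = r * dist x y := by
        rw [Subtype.dist_eq, Subtype.dist_eq, dist_eq_norm, dist_eq_norm]
        simp only
        rw [add_sub_add_right_eq_sub, ← smul_sub, norm_smul,
          Real.norm_of_nonneg hr0.le]
      rw [hd]
      calc lipNormOn ({0} ∪ closedBall a r) f.1 * (r * dist x y)
            ≤ lipNormOn ({0} ∪ closedBall a r) f.1 * (1 * dist x y) :=
            mul_le_mul_of_nonneg_left
              (mul_le_mul_of_nonneg_right hr1.le dist_nonneg) hK0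
        _ = lipNormOn ({0} ∪ closedBall a r) f.1 * dist x y := by ring
    · rw [hTsnd f]
      have h1 := hKL ⟨a, haM⟩ ⟨0, h0M⟩
      rw [f.2.1 ⟨0, h0M⟩ rfl, sub_zero] at h1
      refine h1.trans ?_
      have hd : dist (⟨a, haM⟩ : (({0} ∪ closedBall a r : Set X)))
          (⟨0, h0M⟩ : (({0} ∪ closedBall a r : Set X))) = ‖a‖ := by
        rw [Subtype.dist_eq]
        simp [dist_eq_norm]
      rw [hd]
      calc lipNormOn ({0} ∪ closedBall a r) f.1 * ‖a‖
            ≤ lipNormOn ({0} ∪ closedBall a r) f.1 * 1 :=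
            mul_le_mul_of_nonneg_left ha1 hK0
        _ = lipNormOn ({0} ∪ closedBall a r) f.1 := mul_one _
  · -- inverse bound
    intro f
    obtain ⟨hKg0, hKgL⟩ := lipNormOn_spec (T f).1.2.2
    have hCpos : (0:ℝ) ≤ max (1/r) (2/(‖a‖ - r)) :=
      le_trans (by positivity) (le_max_left (1/r) (2/(‖a‖-r)))
    have hKpos : (0:ℝ) ≤ max (lipNormOn (closedBall (0:X) 1) (T f).1.1) |(T f).2| :=
      le_trans hKg0 (le_max_left _ _)
    apply lipNormOn_le (by positivity)
    apply lipCore r a hr0 hra f.1 (T f).1.1 (T f).2 _ hKg0 (T f).1.2.1 hKgL f.2.1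
    intro m hm hy
    have h1 := hfval f m hm
    have h2 := hTsnd f
    have h3 : (T f).1.1 ⟨r⁻¹ • ((m:X) - a), hy⟩ =
        (T f).1.1 ⟨r⁻¹ • ((m:X) - a), hinvB _ hm⟩ := rfl
    rw [h3, h1, h2]
    ring
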